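/- The minimum size of a locally nonforesty graph of order 6 is 11. -/

import Mathlib

open SimpleGraph

def LocallyNonforesty {V : Type*} (G : SimpleGraph V) : Prop :=
  ∀ v : V, ¬ (G.induce (G.neighborSet v)).IsAcyclic

def ThreeConnected {V : Type*} [Fintype V] (G : SimpleGraph V) : Prop :=
  4 ≤ Fintype.card V ∧ ∀ S : Finset V, S.card ≤ 2 → (G.induce ((↑S : Set V)ᶜ)).Connected

/-! ### Nat-level computational model -/

def idxN (a b : ℕ) : ℕ := cond (Nat.ble a b) (a*(9-a)/2 + b - 1) (b*(9-b)/2 + a - 1)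
def bitN (n i : ℕ) : Bool := ((n >>> i) &&& 1) == 1
def bc (m : ℕ) : ℕ := (m &&& 1) + ((m >>> 1) &&& 1) + ((m >>> 2) &&& 1) + ((m >>> 3) &&& 1) + ((m >>> 4) &&& 1) + ((m >>> 5) &&& 1)
def adjN (n v y : ℕ) : Bool := (v != y) && bitN n (idxN v y)
def enc (f : ℕ → Bool) : ℕ :=
  cond (f 0) 1 0 + cond (f 1) 2 0 + cond (f 2) 4 0 +
  cond (f 3) 8 0 + cond (f 4) 16 0 + cond (f 5) 32 0
def mask (n v : ℕ) : ℕ := enc (adjN n v)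
def degN (n v : ℕ) : ℕ := bc (mask n v)

def P (n : ℕ) : Prop :=
  (∀ v < 6, 3 ≤ degN n v)
  ∧ (degN n 0 + degN n 1 + degN n 2 + degN n 3 + degN n 4 + degN n 5 ≤ 20)
  ∧ (∀ v < 6, ∃ x < 6, bitN (mask n v) x = true ∧ 2 ≤ bc (mask n v &&& mask n x))
  ∧ (∀ v < 6, ∃ t < 64, t ≠ 0 ∧ t &&& mask n v = t ∧
      ∀ x < 6, bitN t x = true → 2 ≤ bc (t &&& mask n x))

instance (n : ℕ) : Decidable (P n) := by unfold P; infer_instance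

/-! ### The graph family -/

lemma idxN_comm (a b : ℕ) : idxN a b = idxN b a := by
  unfold idxN
  rcases Nat.lt_trichotomy a b with h | h | h
  · have h1 : Nat.ble a b = true := Nat.ble_eq.mpr h.le
    have h2 : Nat.ble b a = false := by
      rw [← Bool.not_eq_true, Nat.ble_eq]; omega
    rw [h1, h2]; rfl
  · subst h; rfl
  · have h1 : Nat.ble b a = true := Nat.ble_eq.mpr h.le
    have h2 : Nat.ble a b = false := by
      rw [← Bool.not_eq_true, Nat.ble_eq]; omega
    rw [h1, h2]; rfl

def Gb (n : ℕ) : SimpleGraph (Fin 6) where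
  Adj x y := x ≠ y ∧ bitN n (idxN x.val y.val) = true
  symm := by
    constructor
    intro x y ⟨h1, h2⟩
    exact ⟨h1.symm, by rwa [idxN_comm]⟩
  loopless := by constructor; intro x ⟨h, _⟩; exact h rfl

instance (n : ℕ) : DecidableRel (Gb n).Adj := fun x y => by
  unfold Gb; infer_instance

lemma adj_iff (n : ℕ) (x y : Fin 6) :
    (Gb n).Adj x y ↔ adjN n x.val y.val = true := by
  show (x ≠ y ∧ _) ↔ _
  rw [adjN, Bool.and_eq_true, bne_iff_ne]
  constructor
  · rintro ⟨h1, h2⟩; exact ⟨fun h => h1 (Fin.ext h), h2⟩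
  · rintro ⟨h1, h2⟩; exact ⟨fun h => h1 (by rw [h]), h2⟩

/-! ### enc lemmas -/

lemma bitN_enc (f : ℕ → Bool) (y : Fin 6) : bitN (enc f) y.val = f y.val := by
  have h : ∀ b0 b1 b2 b3 b4 b5 : Bool, ∀ y : Fin 6,
      bitN (cond b0 1 0 + cond b1 2 0 + cond b2 4 0 + cond b3 8 0 + cond b4 16 0 + cond b5 32 0) y.val
        = ![b0, b1, b2, b3, b4, b5] y := by decide
  have h2 := h (f 0) (f 1) (f 2) (f 3) (f 4) (f 5) y
  rcases y with ⟨y, hy⟩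
  interval_cases y <;> exact h2

lemma enc_lt (f : ℕ → Bool) : enc f < 64 := by
  have h : ∀ b0 b1 b2 b3 b4 b5 : Bool,
      cond b0 1 0 + cond b1 2 0 + cond b2 4 0 + cond b3 8 0 + cond b4 16 0 + cond b5 32 0 < 64 := by decide
  exact h _ _ _ _ _ _

lemma enc_land (f g : ℕ → Bool) : enc f &&& enc g = enc (fun i => f i && g i) := by
  have h : ∀ b0 b1 b2 b3 b4 b5 c0 c1 c2 c3 c4 c5 : Bool,
      (cond b0 1 0 + cond b1 2 0 + cond b2 4 0 + cond b3 8 0 + cond b4 16 0 + cond b5 32 0) &&&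
      (cond c0 1 0 + cond c1 2 0 + cond c2 4 0 + cond c3 8 0 + cond c4 16 0 + cond c5 32 0) =
      cond (b0 && c0) 1 0 + cond (b1 && c1) 2 0 + cond (b2 && c2) 4 0 + cond (b3 && c3) 8 0 +
      cond (b4 && c4) 16 0 + cond (b5 && c5) 32 0 := by decide
  exact h _ _ _ _ _ _ _ _ _ _ _ _

lemma enc_congr {f g : ℕ → Bool} (h : ∀ i, f i = g i) : enc f = enc g := by
  unfold enc; rw [h 0, h 1, h 2, h 3, h 4, h 5]

lemma bc_enc_card (f : ℕ → Bool) :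
    bc (enc f) = (Finset.univ.filter (fun y : Fin 6 => f y.val = true)).card := by
  have h : ∀ b0 b1 b2 b3 b4 b5 : Bool,
      bc (cond b0 1 0 + cond b1 2 0 + cond b2 4 0 + cond b3 8 0 + cond b4 16 0 + cond b5 32 0)
        = cond b0 1 0 + cond b1 1 0 + cond b2 1 0 + cond b3 1 0 + cond b4 1 0 + cond b5 1 0 := by
    decide
  rw [Finset.card_filter, Fin.sum_univ_six]
  have e : ∀ b : Bool, (if b = true then (1:ℕ) else 0) = cond b 1 0 := by
    intro b; cases b <;> rfl
  simp only [e]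
  exact h (f 0) (f 1) (f 2) (f 3) (f 4) (f 5)

/-! ### degree bridge -/

lemma deg_eq (n : ℕ) (v : Fin 6) : (Gb n).degree v = degN n v.val := by
  show ((Gb n).neighborFinset v).card = _
  rw [SimpleGraph.neighborFinset_eq_filter]
  rw [show (Finset.univ.filter ((Gb n).Adj v))
        = Finset.univ.filter (fun y : Fin 6 => adjN n v.val y.val = true) from
      Finset.filter_congr (fun y _ => by rw [adj_iff])]
  rw [← bc_enc_card]
  rfl

/-! ### cycles give certificates -/

lemma cycle_start_two_nbrs {V : Type*} {H : SimpleGraph V} {x : V} (c : H.Walk x x)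
    (hc : c.IsCycle) :
    ∃ b d, b ≠ d ∧ H.Adj x b ∧ H.Adj x d ∧ b ∈ c.support ∧ d ∈ c.support := by
  cases c with
  | nil => exact absurd rfl hc.ne_nil
  | @cons _ b _ hxb q =>
    obtain ⟨d, hxd, q2, hq2⟩ :=
      SimpleGraph.Walk.exists_eq_cons_of_ne (hxb.ne) q.reverse
    have hbsup : b ∈ (SimpleGraph.Walk.cons hxb q).support :=
      List.mem_cons_of_mem _ q.start_mem_support
    have hdq : d ∈ q.support := by
      have : d ∈ q.reverse.support := by
        rw [hq2, SimpleGraph.Walk.support_cons]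
        exact List.mem_cons_of_mem _ q2.start_mem_support
      rwa [SimpleGraph.Walk.support_reverse, List.mem_reverse] at this
    have hdsup : d ∈ (SimpleGraph.Walk.cons hxb q).support :=
      List.mem_cons_of_mem _ hdq
    refine ⟨b, d, ?_, hxb, hxd, hbsup, hdsup⟩
    rintro rfl
    have hed : s(x, b) ∈ q.edges := by
      have : s(x, b) ∈ q.reverse.edges := by
        rw [hq2, SimpleGraph.Walk.edges_cons]
        exact List.mem_cons_self
      rwa [SimpleGraph.Walk.edges_reverse, List.mem_reverse] at this
    have hnodup := hc.edges_nodup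
    rw [SimpleGraph.Walk.edges_cons] at hnodup
    exact (List.nodup_cons.mp hnodup).1 hed

lemma cycle_two_nbrs {V : Type*} [DecidableEq V] {H : SimpleGraph V} {a : V} {c : H.Walk a a}
    (hc : c.IsCycle) {x : V} (hx : x ∈ c.support) :
    ∃ b d, b ≠ d ∧ H.Adj x b ∧ H.Adj x d ∧ b ∈ c.support ∧ d ∈ c.support := by
  obtain ⟨b, d, hbd, hxb, hxd, hbs, hds⟩ :=
    cycle_start_two_nbrs (c.rotate x hx) (hc.rotate hx)
  have hsub : ∀ z, z ∈ (c.rotate x hx).support → z ∈ c.support := by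
    intro z hz
    rw [SimpleGraph.Walk.mem_support_iff] at hz
    rcases hz with rfl | hz
    · exact hx
    · have := (SimpleGraph.Walk.support_rotate c x hx).mem_iff.mp hz
      rw [SimpleGraph.Walk.support_eq_cons c]
      exact List.mem_cons_of_mem _ this
  exact ⟨b, d, hbd, hxb, hxd, hsub b hbs, hsub d hds⟩

lemma exists_cert {G : SimpleGraph (Fin 6)} [DecidableRel G.Adj] {v : Fin 6}
    (h : ¬ (G.induce (G.neighborSet v)).IsAcyclic) :
    ∃ T : Finset (Fin 6), T.Nonempty ∧ (∀ x ∈ T, G.Adj v x) ∧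
      ∀ x ∈ T, 2 ≤ (T.filter (fun y => G.Adj x y)).card := by
  simp only [SimpleGraph.IsAcyclic, not_forall, not_not] at h
  obtain ⟨w, c, hc⟩ := h
  refine ⟨(c.support.toFinset).image Subtype.val, ?_, ?_, ?_⟩
  · exact ⟨w.val, Finset.mem_image_of_mem _ (List.mem_toFinset.mpr c.start_mem_support)⟩
  · rintro x hx
    obtain ⟨z, _, rfl⟩ := Finset.mem_image.mp hx
    exact z.2
  · rintro x hx
    obtain ⟨z, hzS, rfl⟩ := Finset.mem_image.mp hx
    obtain ⟨b, d, hbd, hzb, hzd, hbs, hds⟩ :=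
      cycle_two_nbrs hc (List.mem_toFinset.mp hzS)
    have hzb' : G.Adj z.val b.val := by simpa using hzb
    have hzd' : G.Adj z.val d.val := by simpa using hzd
    have hbT : b.val ∈ (c.support.toFinset.image Subtype.val).filter
        (fun y => G.Adj z.val y) := by
      refine Finset.mem_filter.mpr ⟨Finset.mem_image_of_mem _ (List.mem_toFinset.mpr hbs), hzb'⟩
    have hdT : d.val ∈ (c.support.toFinset.image Subtype.val).filter
        (fun y => G.Adj z.val y) := by
      refine Finset.mem_filter.mpr ⟨Finset.mem_image_of_mem _ (List.mem_toFinset.mpr hds), hzd'⟩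
    calc 2 = ({b.val, d.val} : Finset (Fin 6)).card :=
            (Finset.card_pair (Subtype.coe_injective.ne hbd)).symm
      _ ≤ _ := Finset.card_le_card (by
            intro y hy
            rcases Finset.mem_insert.mp hy with rfl | hy
            · exact hbT
            · rw [Finset.mem_singleton.mp hy]; exact hdT)

/-! ### triangles defeat acyclicity -/

lemma triangle_not_acyclic {V : Type*} {H : SimpleGraph V} {a b c : V}
    (hab : H.Adj a b) (hbc : H.Adj b c) (hca : H.Adj c a) : ¬ H.IsAcyclic := by
  intro hA
  have h1 : a ≠ b := hab.ne
  have h2 : b ≠ c := hbc.ne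
  have h3 : c ≠ a := hca.ne
  refine hA (SimpleGraph.Walk.cons hab (SimpleGraph.Walk.cons hbc
    (SimpleGraph.Walk.cons hca SimpleGraph.Walk.nil))) ?_
  refine ⟨⟨⟨?_⟩, by simp⟩, ?_⟩
  · simp only [SimpleGraph.Walk.edges_cons, SimpleGraph.Walk.edges_nil]
    simp [Sym2.eq_iff]
    try tauto
  · simp only [SimpleGraph.Walk.support_cons, SimpleGraph.Walk.support_nil]
    simp [h1, h2, h3, h1.symm, h2.symm, h3.symm]
    try tauto


/-! ### binary encoding -/

def encB (f : ℕ → Bool) : ℕ → ℕ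
  | 0 => 0
  | k+1 => 2 * encB (fun i => f (i+1)) k + cond (f 0) 1 0

lemma encB_lt : ∀ (k : ℕ) (f : ℕ → Bool), encB f k < 2^k := by
  intro k
  induction k with
  | zero => intro f; simp [encB]
  | succ k ih =>
    intro f
    have h1 := ih (fun i => f (i+1))
    have h2 : (2:ℕ)^(k+1) = 2 * 2^k := by ring
    show 2 * encB (fun i => f (i+1)) k + cond (f 0) 1 0 < 2^(k+1)
    cases f 0 <;> simp only [cond] <;> omega

lemma bitN_encB : ∀ (k : ℕ) (f : ℕ → Bool) (i : ℕ), i < k → bitN (encB f k) i = f i := by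
  intro k
  induction k with
  | zero => intro f i hi; omega
  | succ k ih =>
    intro f i hi
    cases i with
    | zero =>
      have hm : encB f (k+1) % 2 = cond (f 0) 1 0 := by
        show (2 * encB (fun i => f (i+1)) k + cond (f 0) 1 0) % 2 = _
        cases f 0 <;> simp only [cond] <;> omega
      simp only [bitN, Nat.shiftRight_zero, Nat.and_one_is_mod, hm]
      cases f 0 <;> rfl
    | succ j =>
      have hdiv : encB f (k+1) / 2 = encB (fun i => f (i+1)) k := by
        show (2 * encB (fun i => f (i+1)) k + cond (f 0) 1 0) / 2 = _
        cases f 0 <;> simp only [cond] <;> omega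
      have hb : bitN (encB f (k+1)) (j+1) = bitN (encB f (k+1) / 2) j := by
        simp only [bitN]
        rw [Nat.shiftRight_eq_div_pow, Nat.shiftRight_eq_div_pow, Nat.div_div_eq_div_mul,
          ← pow_succ']
      rw [hb, hdiv, ih _ j (by omega)]

def pFst : ℕ → Fin 6
  | 0 => 0 | 1 => 0 | 2 => 0 | 3 => 0 | 4 => 0
  | 5 => 1 | 6 => 1 | 7 => 1 | 8 => 1
  | 9 => 2 | 10 => 2 | 11 => 2
  | 12 => 3 | 13 => 3
  | _ => 4

def pSnd : ℕ → Fin 6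
  | 0 => 1 | 1 => 2 | 2 => 3 | 3 => 4 | 4 => 5
  | 5 => 2 | 6 => 3 | 7 => 4 | 8 => 5
  | 9 => 3 | 10 => 4 | 11 => 5
  | 12 => 4 | 13 => 5
  | _ => 5

lemma pair_spec : ∀ x y : Fin 6, x ≠ y → idxN x.val y.val < 15 ∧
    ((pFst (idxN x.val y.val) = x ∧ pSnd (idxN x.val y.val) = y) ∨
     (pFst (idxN x.val y.val) = y ∧ pSnd (idxN x.val y.val) = x)) := by decide

lemma decode (G : SimpleGraph (Fin 6)) [DecidableRel G.Adj] :
    ∃ n < 32768, Gb n = G := by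
  refine ⟨encB (fun i => decide (G.Adj (pFst i) (pSnd i))) 15, ?_, ?_⟩
  · have := encB_lt 15 (fun i => decide (G.Adj (pFst i) (pSnd i)))
    norm_num at this; exact this
  · ext x y
    show (x ≠ y ∧ bitN _ (idxN x.val y.val) = true) ↔ G.Adj x y
    constructor
    · rintro ⟨hne, hbit⟩
      rw [bitN_encB 15 _ _ (pair_spec x y hne).1] at hbit
      have h := of_decide_eq_true hbit
      rcases (pair_spec x y hne).2 with ⟨h1, h2⟩ | ⟨h1, h2⟩
      · rwa [h1, h2] at h
      · rw [h1, h2] at h; exact h.symm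
    · intro hadj
      have hne := hadj.ne
      refine ⟨hne, ?_⟩
      rw [bitN_encB 15 _ _ (pair_spec x y hne).1]
      rcases (pair_spec x y hne).2 with ⟨h1, h2⟩ | ⟨h1, h2⟩
      · rw [h1, h2]; exact decide_eq_true hadj
      · rw [h1, h2]; exact decide_eq_true hadj.symm

lemma bitN_zero (i : ℕ) : bitN 0 i = false := by
  simp [bitN, Nat.zero_shiftRight]

/-! ### the certificate implies P -/

lemma P_of_certs (n : ℕ)
    (hcard : (Gb n).edgeFinset.card ≤ 10)
    (hcert : ∀ v : Fin 6, ∃ T : Finset (Fin 6), T.Nonempty ∧ (∀ x ∈ T, (Gb n).Adj v x) ∧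
      ∀ x ∈ T, 2 ≤ (T.filter (fun y => (Gb n).Adj x y)).card) : P n := by
  have hdeg : ∀ v : Fin 6, 3 ≤ (Gb n).degree v := by
    intro v
    obtain ⟨T, hTne, hTsub, hTc⟩ := hcert v
    obtain ⟨x0, hx0⟩ := hTne
    have h2 : 2 ≤ (T.erase x0).card := by
      refine le_trans (hTc x0 hx0) (Finset.card_le_card ?_)
      intro y hy
      have hy' := Finset.mem_filter.mp hy
      exact Finset.mem_erase.mpr ⟨hy'.2.ne', hy'.1⟩
    have h3 : 3 ≤ T.card := by
      have := Finset.card_erase_of_mem hx0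
      omega
    refine le_trans h3 (Finset.card_le_card ?_)
    intro y hy
    simp only [SimpleGraph.mem_neighborFinset]
    exact hTsub y hy
  refine ⟨?_, ?_, ?_, ?_⟩
  · -- min degree
    intro v hv
    have := hdeg ⟨v, hv⟩
    rwa [deg_eq] at this
  · -- degree sum
    have hsum := SimpleGraph.sum_degrees_eq_twice_card_edges (Gb n)
    rw [Fin.sum_univ_six] at hsum
    simp only [deg_eq] at hsum
    have hsum' : degN n 0 + degN n 1 + degN n 2 + degN n 3 + degN n 4 + degN n 5
        = 2 * (Gb n).edgeFinset.card := hsum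
    omega
  · -- common neighbor filter
    intro v hv
    set V : Fin 6 := ⟨v, hv⟩ with hV
    obtain ⟨T, hTne, hTsub, hTc⟩ := hcert V
    obtain ⟨x0, hx0⟩ := hTne
    refine ⟨x0.val, x0.isLt, ?_, ?_⟩
    · show bitN (enc (adjN n V.val)) x0.val = true
      rw [bitN_enc]
      exact (adj_iff n V x0).mp (hTsub x0 hx0)
    · show 2 ≤ bc (enc (adjN n V.val) &&& enc (adjN n x0.val))
      rw [enc_land, bc_enc_card]
      refine le_trans (hTc x0 hx0) (Finset.card_le_card ?_)
      intro y hy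
      have hy' := Finset.mem_filter.mp hy
      refine Finset.mem_filter.mpr ⟨Finset.mem_univ _, ?_⟩
      rw [Bool.and_eq_true]
      exact ⟨(adj_iff n V y).mp (hTsub y hy'.1), (adj_iff n x0 y).mp hy'.2⟩
  · -- the certificate set
    intro v hv
    set V : Fin 6 := ⟨v, hv⟩ with hV
    obtain ⟨T, hTne, hTsub, hTc⟩ := hcert V
    classical
    refine ⟨enc (fun i => decide (∃ z ∈ T, z.val = i)), enc_lt _, ?_, ?_, ?_⟩
    · -- nonzero
      obtain ⟨x0, hx0⟩ := hTne
      intro h0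
      have hb := bitN_enc (fun i => decide (∃ z ∈ T, z.val = i)) x0
      rw [h0, bitN_zero] at hb
      have : (∃ z ∈ T, z.val = x0.val) := ⟨x0, hx0, rfl⟩
      rw [decide_eq_true this] at hb
      exact Bool.false_ne_true hb
    · -- subset of neighborhood
      show enc _ &&& enc (adjN n V.val) = enc _
      rw [enc_land]
      refine enc_congr ?_
      intro i
      by_cases hfi : (∃ z ∈ T, z.val = i)
      · obtain ⟨z, hz, rfl⟩ := hfi
        rw [decide_eq_true ⟨z, hz, rfl⟩, (adj_iff n V z).mp (hTsub z hz), Bool.true_and]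
      · rw [decide_eq_false hfi, Bool.false_and]
    · -- internal degree two
      intro x hx hbit
      have hb := bitN_enc (fun i => decide (∃ z ∈ T, z.val = i)) ⟨x, hx⟩
      rw [hbit] at hb
      obtain ⟨z, hz, hzval⟩ := of_decide_eq_true hb.symm
      show 2 ≤ bc (enc _ &&& enc (adjN n x))
      rw [enc_land, bc_enc_card]
      refine le_trans (hTc z hz) (Finset.card_le_card ?_)
      intro y hy
      have hy' := Finset.mem_filter.mp hy
      refine Finset.mem_filter.mpr ⟨Finset.mem_univ _, ?_⟩
      rw [Bool.and_eq_true]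
      refine ⟨decide_eq_true ⟨y, hy'.1, rfl⟩, ?_⟩
      have := (adj_iff n z y).mp hy'.2
      rwa [hzval] at this


lemma lnf_of_triangles {G : SimpleGraph (Fin 6)}
    (h : ∀ v : Fin 6, ∃ a b c : Fin 6, G.Adj v a ∧ G.Adj v b ∧ G.Adj v c ∧
      G.Adj a b ∧ G.Adj b c ∧ G.Adj c a) :
    LocallyNonforesty G := by
  intro v
  obtain ⟨a, b, c, h1, h2, h3, h4, h5, h6⟩ := h v
  exact triangle_not_acyclic (H := G.induce (G.neighborSet v))
    (a := ⟨a, h1⟩) (b := ⟨b, h2⟩) (c := ⟨c, h3⟩) h4 h5 h6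

set_option maxRecDepth 100000 in
set_option maxHeartbeats 12000000 in
theorem blk0 : ∀ a < 64, ∀ b < 64, ¬ P (a * 64 + b) := by decide

set_option maxRecDepth 100000 in
set_option maxHeartbeats 12000000 in
theorem blk1 : ∀ a < 64, ∀ b < 64, ¬ P ((64 + a) * 64 + b) := by decide

set_option maxRecDepth 100000 in
set_option maxHeartbeats 12000000 in
theorem blk2 : ∀ a < 64, ∀ b < 64, ¬ P ((128 + a) * 64 + b) := by decide

set_option maxRecDepth 100000 in
set_option maxHeartbeats 12000000 in
theorem blk3 : ∀ a < 64, ∀ b < 64, ¬ P ((192 + a) * 64 + b) := by decide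

set_option maxRecDepth 100000 in
set_option maxHeartbeats 12000000 in
theorem blk4 : ∀ a < 64, ∀ b < 64, ¬ P ((256 + a) * 64 + b) := by decide

set_option maxRecDepth 100000 in
set_option maxHeartbeats 12000000 in
theorem blk5 : ∀ a < 64, ∀ b < 64, ¬ P ((320 + a) * 64 + b) := by decide

set_option maxRecDepth 100000 in
set_option maxHeartbeats 12000000 in
theorem blk6 : ∀ a < 64, ∀ b < 64, ¬ P ((384 + a) * 64 + b) := by decide

set_option maxRecDepth 100000 in
set_option maxHeartbeats 12000000 in
theorem blk7 : ∀ a < 64, ∀ b < 64, ¬ P ((448 + a) * 64 + b) := by decide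

theorem P_false : ∀ n < 32768, ¬ P n := by
  have key : ∀ q, q < 512 → ∀ r, r < 64 → ¬ P (q * 64 + r) := by
    intro q hq r hr
    rcases Nat.lt_or_ge q 64 with h | h
    · exact blk0 q h r hr
    · rcases Nat.lt_or_ge q 128 with h2 | h2
      · have hb := blk1 (q - 64) (by omega) r hr
        rwa [show 64 + (q - 64) = q by omega] at hb
      · rcases Nat.lt_or_ge q 192 with h2 | h2
        · have hb := blk2 (q - 128) (by omega) r hr
          rwa [show 128 + (q - 128) = q by omega] at hb
        · rcases Nat.lt_or_ge q 256 with h2 | h2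
          · have hb := blk3 (q - 192) (by omega) r hr
            rwa [show 192 + (q - 192) = q by omega] at hb
          · rcases Nat.lt_or_ge q 320 with h2 | h2
            · have hb := blk4 (q - 256) (by omega) r hr
              rwa [show 256 + (q - 256) = q by omega] at hb
            · rcases Nat.lt_or_ge q 384 with h2 | h2
              · have hb := blk5 (q - 320) (by omega) r hr
                rwa [show 320 + (q - 320) = q by omega] at hb
              · rcases Nat.lt_or_ge q 448 with h2 | h2
                · have hb := blk6 (q - 384) (by omega) r hr
                  rwa [show 384 + (q - 384) = q by omega] at hb
                · have hb := blk7 (q - 448) (by omega) r hr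
                  rwa [show 448 + (q - 448) = q by omega] at hb
  intro n hn hP
  have h2 := key (n / 64) (by omega) (n % 64) (by omega)
  rw [show n / 64 * 64 + n % 64 = n by omega] at h2
  exact h2 hP

theorem stmt7 :
    IsLeast {m : ℕ | ∃ G : SimpleGraph (Fin 6),
      LocallyNonforesty G ∧ G.edgeSet.ncard = m} 11 := by
  constructor
  · refine ⟨Gb 32359, lnf_of_triangles (by decide), ?_⟩
    rw [← SimpleGraph.coe_edgeFinset, Set.ncard_coe_finset]
    decide
  · rintro m ⟨G, hLNF, hm⟩
    haveI : DecidableRel G.Adj := Classical.decRel _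
    obtain ⟨n, hn, hGn⟩ := decode G
    rw [← hGn] at hLNF hm
    by_contra hlt
    push_neg at hlt
    have hcard : (Gb n).edgeFinset.card ≤ 10 := by
      have h : (Gb n).edgeSet.ncard = (Gb n).edgeFinset.card := by
        rw [← SimpleGraph.coe_edgeFinset, Set.ncard_coe_finset]
      omega
    exact P_false n hn (P_of_certs n hcard (fun v => exists_cert (hLNF v)))
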